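/- Let F be a field and let χ, s ∈ F be nonzero with χ² ≠ 1. Set a = χ + χ⁻¹, t = (χ + χ⁻¹) * (χ - χ⁻¹)⁻¹, b = t * (s + s⁻¹), and c = t * (s*χ + (s*χ)⁻¹). Then a² + b² + c² = a*b*c, i.e. the triple (a, b, c) satisfies the Markoff equation over F. -/

import Mathlib

theorem markoff_parameterization (F : Type*) [Field F] (χ s : F) (hχ0 : χ ≠ 0) (hs0 : s ≠ 0)
    (hχ1 : χ ^ 2 ≠ 1) :
    let a := χ + χ⁻¹
    let t := (χ + χ⁻¹) * (χ - χ⁻¹)⁻¹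
    let b := t * (s + s⁻¹)
    let c := t * (s * χ + (s * χ)⁻¹)
    a ^ 2 + b ^ 2 + c ^ 2 = a * b * c := by
  intro a t b c
  have hd : χ - χ⁻¹ ≠ 0 := by
    intro h
    apply hχ1
    have := sub_eq_zero.mp h
    field_simp at this
    linear_combination this
  have h1 : χ ^ 2 - 1 ≠ 0 := sub_ne_zero.mpr hχ1
  simp only [a, t, b, c]
  rw [show χ - χ⁻¹ = (χ ^ 2 - 1) / χ by field_simp,
      show s * χ + (s * χ)⁻¹ = (s ^ 2 * χ ^ 2 + 1) / (s * χ) by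
        field_simp,
      show χ + χ⁻¹ = (χ ^ 2 + 1) / χ by field_simp,
      show s + s⁻¹ = (s ^ 2 + 1) / s by field_simp]
  field_simp
  ring
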